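/- If Bern(w, r̂ + Δ) ≥ 0 and Γ > Γ̂ > 0, then Bern(w, r̂ + Δ) ≤ (Γ/Γ̂) · Bern(w, r̂ + (Γ̂/Γ)Δ), where Bern(w, r) := b(w)^T (r - r̂) + sqrt(2 log(1/ε) Var(w,r)) + q_max(w) log(1/ε)/3 with q_max(w) := (1/n) max_i |w_i| p_i. -/

import Mathlib

open Finset

private lemma aux_term (W r P d c : ℝ) (hr0 : 0 ≤ r) (hrp : r ≤ P)
    (hc0 : 0 < c) (hc1 : c < 1) :
    c * (W ^ 2 * (r + d) * (P - (r + d))) ≤ W ^ 2 * (r + c * d) * (P - (r + c * d)) := by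
  nlinarith [mul_nonneg (mul_nonneg (sub_nonneg.2 hc1.le) (sq_nonneg W))
      (mul_nonneg hr0 (sub_nonneg.2 hrp)),
    mul_nonneg (mul_nonneg (mul_nonneg hc0.le (sub_nonneg.2 hc1.le)) (sq_nonneg W))
      (sq_nonneg d)]

/-- Bernstein-bound scaling: if `Bern(w, r̂ + Δ) ≥ 0` and `Γ > Γ̂ > 0`, then
`Bern(w, r̂ + Δ) ≤ (Γ/Γ̂)·Bern(w, r̂ + (Γ̂/Γ)Δ)`. -/
theorem stmt_10 (n : ℕ) (hn : 1 ≤ n) (ε : ℝ) (hε0 : 0 < ε) (hε1 : ε < 1)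
    (p rhat Δ : ℕ → ℝ) (w : ℕ → ℝ)
    (hp : ∀ i, 0 ≤ p i) (hbox : ∀ i, 0 ≤ rhat i ∧ rhat i ≤ p i)
    (Γ Γhat : ℝ) (hΓΓ : Γ > Γhat) (hΓhat : Γhat > 0)
    (hnonneg :
      0 ≤ (((1 : ℝ) / n) * ∑ i ∈ range n, w i * Δ i
            - ((1 : ℝ) / n) * ∑ i ∈ range n, Δ (n + i))
          + Real.sqrt (2 * Real.log (1 / ε) * (((1 : ℝ) / (n : ℝ) ^ 2) *
              ∑ i ∈ range n, (w i) ^ 2 * (rhat i + Δ i) * (p i - (rhat i + Δ i))))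
          + (((1 : ℝ) / n) * ⨆ i : Fin n, |w (i : ℕ)| * p (i : ℕ)) * Real.log (1 / ε) / 3) :
    (((1 : ℝ) / n) * ∑ i ∈ range n, w i * Δ i
        - ((1 : ℝ) / n) * ∑ i ∈ range n, Δ (n + i))
      + Real.sqrt (2 * Real.log (1 / ε) * (((1 : ℝ) / (n : ℝ) ^ 2) *
          ∑ i ∈ range n, (w i) ^ 2 * (rhat i + Δ i) * (p i - (rhat i + Δ i))))
      + (((1 : ℝ) / n) * ⨆ i : Fin n, |w (i : ℕ)| * p (i : ℕ)) * Real.log (1 / ε) / 3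
    ≤ (Γ / Γhat) *
        ((((1 : ℝ) / n) * ∑ i ∈ range n, w i * ((Γhat / Γ) * Δ i)
            - ((1 : ℝ) / n) * ∑ i ∈ range n, (Γhat / Γ) * Δ (n + i))
          + Real.sqrt (2 * Real.log (1 / ε) * (((1 : ℝ) / (n : ℝ) ^ 2) *
              ∑ i ∈ range n, (w i) ^ 2 * (rhat i + (Γhat / Γ) * Δ i) *
                (p i - (rhat i + (Γhat / Γ) * Δ i))))
          + (((1 : ℝ) / n) * ⨆ i : Fin n, |w (i : ℕ)| * p (i : ℕ)) *
              Real.log (1 / ε) / 3) := by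
  have hΓ : (0 : ℝ) < Γ := hΓhat.trans hΓΓ
  set c : ℝ := Γhat / Γ with hc
  have hc0 : 0 < c := div_pos hΓhat hΓ
  have hc1 : c < 1 := (div_lt_one hΓ).mpr hΓΓ
  have hcinv : Γ / Γhat = 1 / c := by
    rw [hc]; field_simp
  have hn0 : (0 : ℝ) < n := by exact_mod_cast hn
  have hlog : 0 ≤ Real.log (1 / ε) :=
    Real.log_nonneg (one_le_one_div hε0 hε1.le)
  set K : ℝ := 2 * Real.log (1 / ε) with hK
  have hK0 : 0 ≤ K := by positivity
  set Q : ℝ := (((1 : ℝ) / n) * ⨆ i : Fin n, |w (i : ℕ)| * p (i : ℕ)) * Real.log (1 / ε) / 3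
    with hQ
  have hQ0 : 0 ≤ Q := by
    have hsup : 0 ≤ ⨆ i : Fin n, |w (i : ℕ)| * p (i : ℕ) :=
      Real.iSup_nonneg fun i => mul_nonneg (abs_nonneg _) (hp i)
    have h1n : 0 ≤ (1 : ℝ) / n := by positivity
    exact div_nonneg (mul_nonneg (mul_nonneg h1n hsup) hlog) (by norm_num)
  set V1 : ℝ := ∑ i ∈ range n, (w i) ^ 2 * (rhat i + Δ i) * (p i - (rhat i + Δ i)) with hV1
  set Vc : ℝ := ∑ i ∈ range n, (w i) ^ 2 * (rhat i + c * Δ i) * (p i - (rhat i + c * Δ i))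
    with hVc
  have hVar : c * V1 ≤ Vc := by
    rw [hV1, hVc, Finset.mul_sum]
    exact Finset.sum_le_sum fun i _ =>
      aux_term (w i) (rhat i) (p i) (Δ i) c (hbox i).1 (hbox i).2 hc0 hc1
  -- linear part
  set L : ℝ := ((1 : ℝ) / n) * ∑ i ∈ range n, w i * Δ i
      - ((1 : ℝ) / n) * ∑ i ∈ range n, Δ (n + i) with hL
  have hlin : ((1 : ℝ) / n) * ∑ i ∈ range n, w i * (c * Δ i)
      - ((1 : ℝ) / n) * ∑ i ∈ range n, c * Δ (n + i) = c * L := by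
    rw [hL]
    rw [show (∑ i ∈ range n, w i * (c * Δ i)) = c * ∑ i ∈ range n, w i * Δ i by
      rw [Finset.mul_sum]; exact Finset.sum_congr rfl fun i _ => by ring]
    rw [← Finset.mul_sum]
    ring
  -- sqrt part
  have hsqrt : Real.sqrt (K * (((1 : ℝ) / (n : ℝ) ^ 2) * V1))
      ≤ (1 / c) * Real.sqrt (K * (((1 : ℝ) / (n : ℝ) ^ 2) * Vc)) := by
    rcases le_or_gt V1 0 with hV | hV
    · have h1 : K * (((1 : ℝ) / (n : ℝ) ^ 2) * V1) ≤ 0 := by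
        have : ((1 : ℝ) / (n : ℝ) ^ 2) * V1 ≤ 0 :=
          mul_nonpos_of_nonneg_of_nonpos (by positivity) hV
        exact mul_nonpos_of_nonneg_of_nonpos hK0 this
      rw [Real.sqrt_eq_zero_of_nonpos h1]
      positivity
    · have hVc0 : 0 ≤ Vc := le_trans (by positivity) hVar
      have key : K * (((1 : ℝ) / (n : ℝ) ^ 2) * V1)
          ≤ (1 / c) ^ 2 * (K * (((1 : ℝ) / (n : ℝ) ^ 2) * Vc)) := by
        have hV1c : V1 ≤ (1 / c) ^ 2 * Vc := by
          have h1 : c * V1 ≤ Vc := hVar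
          have h2 : c ^ 2 * V1 ≤ c * V1 := by
            nlinarith [mul_nonneg (mul_nonneg hc0.le (sub_nonneg.2 hc1.le)) hV.le]
          have h3 : c ^ 2 * V1 ≤ Vc := h2.trans h1
          rw [show (1 / c) ^ 2 * Vc = Vc / c ^ 2 by ring]
          rw [le_div_iff₀ (by positivity)]
          linarith [h3]
        have hfac : 0 ≤ K * ((1 : ℝ) / (n : ℝ) ^ 2) := by positivity
        calc K * (((1 : ℝ) / (n : ℝ) ^ 2) * V1)
            = (K * ((1 : ℝ) / (n : ℝ) ^ 2)) * V1 := by ring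
          _ ≤ (K * ((1 : ℝ) / (n : ℝ) ^ 2)) * ((1 / c) ^ 2 * Vc) :=
              mul_le_mul_of_nonneg_left hV1c hfac
          _ = (1 / c) ^ 2 * (K * (((1 : ℝ) / (n : ℝ) ^ 2) * Vc)) := by ring
      calc Real.sqrt (K * (((1 : ℝ) / (n : ℝ) ^ 2) * V1))
          ≤ Real.sqrt ((1 / c) ^ 2 * (K * (((1 : ℝ) / (n : ℝ) ^ 2) * Vc))) :=
            Real.sqrt_le_sqrt key
        _ = (1 / c) * Real.sqrt (K * (((1 : ℝ) / (n : ℝ) ^ 2) * Vc)) := by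
            rw [Real.sqrt_mul (by positivity), Real.sqrt_sq (by positivity)]
  have hQle : Q ≤ (1 / c) * Q :=
    le_mul_of_one_le_left hQ0 (one_le_one_div hc0 hc1.le)
  rw [hcinv, hlin]
  have hcc : (1 / c) * (c * L) = L := by field_simp
  calc L + Real.sqrt (K * (((1 : ℝ) / (n : ℝ) ^ 2) * V1)) + Q
      ≤ L + (1 / c) * Real.sqrt (K * (((1 : ℝ) / (n : ℝ) ^ 2) * Vc)) + (1 / c) * Q := by
        have := hsqrt; have := hQle; linarith
    _ = (1 / c) * (c * L + Real.sqrt (K * (((1 : ℝ) / (n : ℝ) ^ 2) * Vc)) + Q) := by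
        rw [mul_add, mul_add, hcc]
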